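/- Let S be a regular tetrahedron in ℍ³ with edge length 2x, and let G be the plane containing one of its facets. Then the width of S determined by G equals arccosh( cosh(2x) / cosh( arcsinh( √(4/3) · sinh x ) ) ). -/

import Mathlib

noncomputable section

namespace HypSpace

/-- Inverse hyperbolic cosine. -/
def arcosh (x : ℝ) : ℝ := Real.log (x + Real.sqrt (x ^ 2 - 1))

/-- The Minkowski bilinear form on `ℝ^{d+1}` (signature `(d,1)`, the last
coordinate being timelike). -/
def mink (d : ℕ) (x y : EuclideanSpace ℝ (Fin (d + 1))) : ℝ :=
  (∑ i : Fin d, x i.castSucc * y i.castSucc) - x (Fin.last d) * y (Fin.last d)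

/-- The hyperboloid model of `d`-dimensional hyperbolic space: the upper sheet
of the two-sheeted hyperboloid `mink x x = -1`. -/
def Pt (d : ℕ) : Type := {x : EuclideanSpace ℝ (Fin (d + 1)) // mink d x x = -1 ∧ 0 < x (Fin.last d)}

variable {d : ℕ}

/-- Hyperbolic distance between two points of `ℍ^d`. -/
def hdist (p q : Pt d) : ℝ := arcosh (-(mink d p.1 q.1))

/-- The geodesic segment between `a` and `b`, described metrically via betweenness
(hyperbolic space is uniquely geodesic). -/
def seg (a b : Pt d) : Set (Pt d) := {p | hdist a p + hdist p b = hdist a b}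

/-- A set is (geodesically) convex if it contains the segment between any two of its points. -/
def IsConvexSet (C : Set (Pt d)) : Prop := ∀ a ∈ C, ∀ b ∈ C, seg a b ⊆ C

/-- The convex hull: the smallest convex set containing `A`. -/
def chull (A : Set (Pt d)) : Set (Pt d) := ⋂₀ {C | IsConvexSet C ∧ A ⊆ C}

/-- The totally geodesic hyperplane with (spacelike) normal vector `v`. -/
def plane (v : EuclideanSpace ℝ (Fin (d + 1))) : Set (Pt d) := {p | mink d v p.1 = 0}

/-- A hyperplane of `ℍ^d`: the trace on the hyperboloid of a linear hyperplane
with spacelike unit normal. -/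
def IsHyperplane (H : Set (Pt d)) : Prop := ∃ v, mink d v v = 1 ∧ H = plane v

/-- Distance from a point to a set. -/
def distPS (p : Pt d) (S : Set (Pt d)) : ℝ := sInf (hdist p '' S)

/-- Distance between two sets. -/
def distSS (A B : Set (Pt d)) : ℝ := sInf {r | ∃ a ∈ A, ∃ b ∈ B, hdist a b = r}

/-- `h` is the orthogonal projection of `g` onto `H`: the point of `H`
realizing the distance from `g` to `H`.  For a hyperplane `H` with `a ∈ H`,
`IsProj b H a` also expresses that `H` is orthogonal to the segment `ab` at `a`. -/
def IsProj (g : Pt d) (H : Set (Pt d)) (h : Pt d) : Prop :=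
  h ∈ H ∧ ∀ k ∈ H, hdist g h ≤ hdist g k

/-- Two hyperplanes are ultraparallel if they are disjoint and not asymptotically
parallel (their distance is positive, i.e. they admit a common perpendicular). -/
def Ultraparallel (H J : Set (Pt d)) : Prop :=
  IsHyperplane H ∧ IsHyperplane J ∧ H ∩ J = ∅ ∧ 0 < distSS H J

/-- `p` is an interior point of `C`. -/
def IsIntr (C : Set (Pt d)) (p : Pt d) : Prop := ∃ ε > 0, ∀ q, hdist p q < ε → q ∈ C

/-- `p` is a boundary point of the (closed) set `C`. -/
def IsBdry (C : Set (Pt d)) (p : Pt d) : Prop := p ∈ C ∧ ¬ IsIntr C p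

/-- `C` is bounded. -/
def IsBddSet (C : Set (Pt d)) : Prop := ∃ R, ∀ a ∈ C, ∀ b ∈ C, hdist a b ≤ R

/-- `C` is closed. -/
def IsClosedSet (C : Set (Pt d)) : Prop :=
  ∀ p : Pt d, (∀ ε > 0, ∃ q ∈ C, hdist p q < ε) → p ∈ C

/-- A convex body: a compact (closed and bounded) convex set with nonempty interior. -/
def IsBody (C : Set (Pt d)) : Prop :=
  IsConvexSet C ∧ IsBddSet C ∧ IsClosedSet C ∧ ∃ p, IsIntr C p

/-- The hyperplane `H` supports `C`: it meets `C` but misses its interior. -/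
def Supports (H C : Set (Pt d)) : Prop :=
  IsHyperplane H ∧ (H ∩ C).Nonempty ∧ ∀ p, IsIntr C p → p ∉ H

/-- The width of `C` determined by `H`, as the maximum distance from `H`
to a point of `C`. -/
def width (H C : Set (Pt d)) : ℝ := sSup ((fun c => distPS c H) '' C)

/-- The width of `C` determined by `H`, as the distance from `H` to a farthest
supporting hyperplane of `C` ultraparallel to `H`. -/
def widthUP (H C : Set (Pt d)) : ℝ :=
  sSup {r | ∃ J, Supports J C ∧ Ultraparallel H J ∧ distSS H J = r}

/-- The thickness of `C`: the minimum width over supporting hyperplanes. -/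
def thickness (C : Set (Pt d)) : ℝ := sInf {r | ∃ H, Supports H C ∧ width H C = r}

/-- The diameter of `C`. -/
def diam (C : Set (Pt d)) : ℝ := sSup {r | ∃ a ∈ C, ∃ b ∈ C, hdist a b = r}

/-- A body of constant width `δ`. -/
def ConstWidth (W : Set (Pt d)) (δ : ℝ) : Prop :=
  IsBody W ∧ ∀ H, Supports H W → width H W = δ

/-- A complete set of diameter `δ`. -/
def CompleteSet (C : Set (Pt d)) (δ : ℝ) : Prop :=
  diam C = δ ∧ ∀ x, x ∉ C → diam (C ∪ {x}) > δ

/-- A body of constant diameter `δ`. -/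
def ConstDiam (C : Set (Pt d)) (δ : ℝ) : Prop :=
  diam C = δ ∧ ∀ p, IsBdry C p → ∃ p' ∈ C, hdist p p' = δ



-- ==== auxiliary lemmas ====
-- Part A : real analysis lemmas
lemma cosh_arcosh {t : ℝ} (ht : 1 ≤ t) : Real.cosh (arcosh t) = t := by
  have h1 : 0 ≤ t ^ 2 - 1 := by nlinarith
  have hs : Real.sqrt (t ^ 2 - 1) ^ 2 = t ^ 2 - 1 := Real.sq_sqrt h1
  have hs0 : 0 ≤ Real.sqrt (t ^ 2 - 1) := Real.sqrt_nonneg _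
  have hy : (0:ℝ) < t + Real.sqrt (t ^ 2 - 1) := by nlinarith
  rw [arcosh, Real.cosh_eq, Real.exp_log hy, Real.exp_neg, Real.exp_log hy]
  rw [inv_eq_one_div]
  field_simp
  nlinarith
lemma sinh_arcosh {t : ℝ} (ht : 1 ≤ t) : Real.sinh (arcosh t) = Real.sqrt (t ^ 2 - 1) := by
  have h1 : 0 ≤ t ^ 2 - 1 := by nlinarith
  have hs : Real.sqrt (t ^ 2 - 1) ^ 2 = t ^ 2 - 1 := Real.sq_sqrt h1
  have hs0 : 0 ≤ Real.sqrt (t ^ 2 - 1) := Real.sqrt_nonneg _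
  have hy : (0:ℝ) < t + Real.sqrt (t ^ 2 - 1) := by nlinarith
  rw [arcosh, Real.sinh_eq, Real.exp_log hy, Real.exp_neg, Real.exp_log hy]
  rw [inv_eq_one_div]
  field_simp
  nlinarith
lemma arcosh_nonneg {t : ℝ} (ht : 1 ≤ t) : 0 ≤ arcosh t := by
  have : (1:ℝ) ≤ t + Real.sqrt (t ^ 2 - 1) := le_add_of_le_of_nonneg ht (Real.sqrt_nonneg _)
  exact Real.log_nonneg this
lemma arcosh_cosh {s : ℝ} (hs : 0 ≤ s) : arcosh (Real.cosh s) = s := by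
  have h1 : Real.cosh s ^ 2 - 1 = Real.sinh s ^ 2 := by
    have := Real.cosh_sq s; linarith
  have h2 : Real.sqrt (Real.cosh s ^ 2 - 1) = Real.sinh s := by
    rw [h1]; exact Real.sqrt_sq (by simpa using Real.sinh_nonneg_iff.mpr hs)
  rw [arcosh, h2, Real.cosh_eq, Real.sinh_eq]
  rw [show (Real.exp s + Real.exp (-s))/2 + (Real.exp s - Real.exp (-s))/2 = Real.exp s by ring]
  exact Real.log_exp s
lemma arcosh_le_arcosh {a b : ℝ} (ha : 1 ≤ a) (h : a ≤ b) : arcosh a ≤ arcosh b := by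
  apply Real.log_le_log (by nlinarith [Real.sqrt_nonneg (a^2-1)])
  have : Real.sqrt (a^2-1) ≤ Real.sqrt (b^2-1) := Real.sqrt_le_sqrt (by nlinarith)
  linarith
lemma arcosh_sqrt_one_add_sq {t : ℝ} (ht : 0 ≤ t) :
    arcosh (Real.sqrt (1 + t ^ 2)) = Real.arsinh t := by
  have h1 : Real.sqrt (1 + t ^ 2) ^ 2 - 1 = t ^ 2 := by
    rw [Real.sq_sqrt (by positivity)]; ring
  rw [arcosh, h1, Real.sqrt_sq ht, Real.arsinh, add_comm t]
lemma arcosh_inj {a b : ℝ} (ha : 1 ≤ a) (hb : 1 ≤ b) (h : arcosh a = arcosh b) : a = b := by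
  have := cosh_arcosh ha; have := cosh_arcosh hb; rw [h] at *; linarith



lemma mink_symm (x y : EuclideanSpace ℝ (Fin (d+1))) : mink d x y = mink d y x := by
  unfold mink; congr 1; · exact Finset.sum_congr rfl fun i _ => mul_comm _ _
  · exact mul_comm _ _

lemma mink_add_left (x y z : EuclideanSpace ℝ (Fin (d+1))) :
    mink d (x + y) z = mink d x z + mink d y z := by
  unfold mink
  simp only [PiLp.add_apply, add_mul, Finset.sum_add_distrib]
  ring

lemma mink_smul_left (c : ℝ) (x y : EuclideanSpace ℝ (Fin (d+1))) :
    mink d (c • x) y = c * mink d x y := by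
  unfold mink
  simp only [PiLp.smul_apply, smul_eq_mul, mul_sub, Finset.mul_sum, mul_assoc]

lemma mink_add_right (x y z : EuclideanSpace ℝ (Fin (d+1))) :
    mink d x (y + z) = mink d x y + mink d x z := by
  rw [mink_symm, mink_add_left, mink_symm y x, mink_symm z x]

lemma mink_smul_right (c : ℝ) (x y : EuclideanSpace ℝ (Fin (d+1))) :
    mink d x (c • y) = c * mink d x y := by
  rw [mink_symm, mink_smul_left, mink_symm]

lemma mink_sub_left (x y z : EuclideanSpace ℝ (Fin (d+1))) :
    mink d (x - y) z = mink d x z - mink d y z := by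
  have : x - y = x + (-1 : ℝ) • y := by module
  rw [this, mink_add_left, mink_smul_left]; ring

lemma mink_sub_right (x y z : EuclideanSpace ℝ (Fin (d+1))) :
    mink d x (y - z) = mink d x y - mink d x z := by
  rw [mink_symm, mink_sub_left, mink_symm y x, mink_symm z x]

lemma mink_zero_left (y : EuclideanSpace ℝ (Fin (d+1))) : mink d 0 y = 0 := by
  have := mink_smul_left (d := d) 0 0 y
  simpa using this

/-- Orthogonal complement of a unit timelike vector is positive. -/
lemma ortho_nonneg {p w : EuclideanSpace ℝ (Fin (d+1))}
    (hp : mink d p p = -1) (h : mink d p w = 0) : 0 ≤ mink d w w := by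
  set pt := p (Fin.last d)
  set wt := w (Fin.last d)
  have hpt : pt ^ 2 = 1 + ∑ i : Fin d, p i.castSucc ^ 2 := by
    have : (∑ i : Fin d, p i.castSucc * p i.castSucc) - pt * pt = -1 := hp
    have h2 : ∑ i : Fin d, p i.castSucc * p i.castSucc = ∑ i : Fin d, p i.castSucc ^ 2 :=
      Finset.sum_congr rfl fun i _ => (sq (p i.castSucc)).symm
    nlinarith [h2]
  have hw : pt * wt = ∑ i : Fin d, p i.castSucc * w i.castSucc := by
    have : (∑ i : Fin d, p i.castSucc * w i.castSucc) - pt * wt = 0 := h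
    linarith
  have hcs := Finset.sum_mul_sq_le_sq_mul_sq Finset.univ
    (fun i : Fin d => p i.castSucc) (fun i : Fin d => w i.castSucc)
  have hsp : 0 ≤ ∑ i : Fin d, p i.castSucc ^ 2 := Finset.sum_nonneg fun i _ => sq_nonneg _
  have hsw : 0 ≤ ∑ i : Fin d, w i.castSucc ^ 2 := Finset.sum_nonneg fun i _ => sq_nonneg _
  have hgoal : mink d w w = (∑ i : Fin d, w i.castSucc ^ 2) - wt ^ 2 := by
    unfold mink
    have h2 : ∑ i : Fin d, w i.castSucc * w i.castSucc = ∑ i : Fin d, w i.castSucc ^ 2 :=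
      Finset.sum_congr rfl fun i _ => (sq (w i.castSucc)).symm
    rw [h2]; ring
  rw [hgoal]
  have hws : (1 + ∑ i : Fin d, p i.castSucc ^ 2) * wt ^ 2 ≤
      (∑ i : Fin d, p i.castSucc ^ 2) * ∑ i : Fin d, w i.castSucc ^ 2 := by
    calc (1 + ∑ i : Fin d, p i.castSucc ^ 2) * wt ^ 2 = (pt * wt) ^ 2 := by rw [← hpt]; ring
    _ = (∑ i : Fin d, p i.castSucc * w i.castSucc) ^ 2 := by rw [hw]
    _ ≤ _ := hcs
  rcases eq_or_lt_of_le hsp with hsp0 | hsp1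
  · have h1 : wt ^ 2 ≤ 0 := by nlinarith [hsp0.symm ▸ hws, hsp0]
    nlinarith [sq_nonneg wt]
  · have h3 : 0 ≤ (∑ i : Fin d, p i.castSucc ^ 2) * ((∑ i : Fin d, w i.castSucc ^ 2) - wt ^ 2) := by
      nlinarith [sq_nonneg wt]
    nlinarith [h3, hsp1]

/-- Equality case: a vector orthogonal to a unit timelike vector with zero norm is zero. -/
lemma ortho_eq_zero {p w : EuclideanSpace ℝ (Fin (d+1))}
    (hp : mink d p p = -1) (h : mink d p w = 0) (hw : mink d w w = 0) : w = 0 := by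
  set pt := p (Fin.last d)
  set wt := w (Fin.last d)
  have hpt : pt ^ 2 = 1 + ∑ i : Fin d, p i.castSucc ^ 2 := by
    have : (∑ i : Fin d, p i.castSucc * p i.castSucc) - pt * pt = -1 := hp
    have h2 : ∑ i : Fin d, p i.castSucc * p i.castSucc = ∑ i : Fin d, p i.castSucc ^ 2 :=
      Finset.sum_congr rfl fun i _ => (sq (p i.castSucc)).symm
    nlinarith [h2]
  have hww : pt * wt = ∑ i : Fin d, p i.castSucc * w i.castSucc := by
    have : (∑ i : Fin d, p i.castSucc * w i.castSucc) - pt * wt = 0 := h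
    linarith
  have hcs := Finset.sum_mul_sq_le_sq_mul_sq Finset.univ
    (fun i : Fin d => p i.castSucc) (fun i : Fin d => w i.castSucc)
  have hsp : 0 ≤ ∑ i : Fin d, p i.castSucc ^ 2 := Finset.sum_nonneg fun i _ => sq_nonneg _
  have hsw : 0 ≤ ∑ i : Fin d, w i.castSucc ^ 2 := Finset.sum_nonneg fun i _ => sq_nonneg _
  have hgoal : (∑ i : Fin d, w i.castSucc ^ 2) - wt ^ 2 = 0 := by
    have h2 : ∑ i : Fin d, w i.castSucc * w i.castSucc = ∑ i : Fin d, w i.castSucc ^ 2 :=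
      Finset.sum_congr rfl fun i _ => (sq (w i.castSucc)).symm
    have : (∑ i : Fin d, w i.castSucc * w i.castSucc) - wt * wt = 0 := hw
    nlinarith [h2]
  have hws : (1 + ∑ i : Fin d, p i.castSucc ^ 2) * wt ^ 2 ≤
      (∑ i : Fin d, p i.castSucc ^ 2) * ∑ i : Fin d, w i.castSucc ^ 2 := by
    calc (1 + ∑ i : Fin d, p i.castSucc ^ 2) * wt ^ 2 = (pt * wt) ^ 2 := by rw [← hpt]; ring
    _ = (∑ i : Fin d, p i.castSucc * w i.castSucc) ^ 2 := by rw [hww]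
    _ ≤ _ := hcs
  have hwt : wt = 0 := by nlinarith [sq_nonneg wt]
  have hswz : ∑ i : Fin d, w i.castSucc ^ 2 = 0 := by nlinarith
  have hcomp : ∀ i : Fin d, w i.castSucc = 0 := by
    intro i
    have := (Finset.sum_eq_zero_iff_of_nonneg (fun j _ => sq_nonneg (w (Fin.castSucc j)))).mp
      hswz i (Finset.mem_univ i)
    exact pow_eq_zero_iff two_ne_zero |>.mp this
  ext j
  refine Fin.lastCases ?_ ?_ j
  · exact hwt
  · intro i; exact hcomp i

/-- Master inequality: for unit timelike `p` and any `y`, `(mink p y)^2 ≥ -(mink y y)`. -/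
lemma master_ineq {p y : EuclideanSpace ℝ (Fin (d+1))} (hp : mink d p p = -1) :
    -(mink d y y) ≤ (mink d p y) ^ 2 := by
  set lam := -(mink d p y) with hlam
  have hperp : mink d p (y - lam • p) = 0 := by
    rw [mink_sub_right, mink_smul_right, hp]; ring
  have h1 : 0 ≤ mink d (y - lam • p) (y - lam • p) := ortho_nonneg hp hperp
  have h2 : mink d (y - lam • p) (y - lam • p)
      = mink d y y - 2 * lam * mink d p y + lam ^ 2 * mink d p p := by
    rw [mink_sub_left, mink_sub_right, mink_sub_right, mink_smul_right, mink_smul_left,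
      mink_smul_left, mink_smul_right, mink_symm y p]
    ring
  rw [h2, hp] at h1
  nlinarith [h1]

/-- Equality case of the master inequality. -/
lemma master_eq {p y : EuclideanSpace ℝ (Fin (d+1))} (hp : mink d p p = -1)
    (h : (mink d p y) ^ 2 = -(mink d y y)) : y = (-(mink d p y)) • p := by
  set lam := -(mink d p y) with hlam
  have hperp : mink d p (y - lam • p) = 0 := by
    rw [mink_sub_right, mink_smul_right, hp]; ring
  have h2 : mink d (y - lam • p) (y - lam • p)
      = mink d y y - 2 * lam * mink d p y + lam ^ 2 * mink d p p := by
    rw [mink_sub_left, mink_sub_right, mink_sub_right, mink_smul_right, mink_smul_left,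
      mink_smul_left, mink_smul_right, mink_symm y p]
    ring
  have h3 : mink d (y - lam • p) (y - lam • p) = 0 := by rw [h2, hp]; nlinarith [h]
  have := ortho_eq_zero hp hperp h3
  have : y = lam • p := by
    have h4 : y - lam • p = 0 := this
    have := sub_eq_zero.mp h4
    exact this
  exact this

/-- Two vectors on the hyperboloid with positive last coordinates have negative product. -/
lemma mink_neg_of_upper {p q : EuclideanSpace ℝ (Fin (d+1))}
    (hp : mink d p p = -1) (hq : mink d q q = -1)
    (hpt : 0 < p (Fin.last d)) (hqt : 0 < q (Fin.last d)) : mink d p q < 0 := by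
  set pt := p (Fin.last d); set qt := q (Fin.last d)
  have hps : ∑ i : Fin d, p i.castSucc ^ 2 = pt ^ 2 - 1 := by
    have : (∑ i : Fin d, p i.castSucc * p i.castSucc) - pt * pt = -1 := hp
    have h2 : ∑ i : Fin d, p i.castSucc * p i.castSucc = ∑ i : Fin d, p i.castSucc ^ 2 :=
      Finset.sum_congr rfl fun i _ => (sq _).symm
    nlinarith
  have hqs : ∑ i : Fin d, q i.castSucc ^ 2 = qt ^ 2 - 1 := by
    have : (∑ i : Fin d, q i.castSucc * q i.castSucc) - qt * qt = -1 := hq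
    have h2 : ∑ i : Fin d, q i.castSucc * q i.castSucc = ∑ i : Fin d, q i.castSucc ^ 2 :=
      Finset.sum_congr rfl fun i _ => (sq _).symm
    nlinarith
  have hcs := Finset.sum_mul_sq_le_sq_mul_sq Finset.univ
    (fun i : Fin d => p i.castSucc) (fun i : Fin d => q i.castSucc)
  rw [hps, hqs] at hcs
  have h1 : (∑ i : Fin d, p i.castSucc * q i.castSucc) ^ 2 ≤ (pt ^ 2 - 1) * (qt ^ 2 - 1) := hcs
  have hgoal : mink d p q = (∑ i : Fin d, p i.castSucc * q i.castSucc) - pt * qt := rfl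
  rw [hgoal]
  have hpt1 : 1 ≤ pt ^ 2 := by nlinarith [Finset.sum_nonneg (fun i (_ : i ∈ Finset.univ) => sq_nonneg (p (Fin.castSucc i))), hps]
  have hqt1 : 1 ≤ qt ^ 2 := by nlinarith [Finset.sum_nonneg (fun i (_ : i ∈ Finset.univ) => sq_nonneg (q (Fin.castSucc i))), hqs]
  nlinarith [h1, mul_pos hpt hqt, sq_nonneg (pt*qt), sq_nonneg ((∑ i : Fin d, p i.castSucc * q i.castSucc) - pt * qt), sq_nonneg ((∑ i : Fin d, p i.castSucc * q i.castSucc) + pt * qt)]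


lemma last_sq_ge_one {y : EuclideanSpace ℝ (Fin (d+1))} (hy : mink d y y = -1) :
    1 ≤ y (Fin.last d) ^ 2 := by
  have : (∑ i : Fin d, y i.castSucc * y i.castSucc) - y (Fin.last d) * y (Fin.last d) = -1 := hy
  have h2 : ∑ i : Fin d, y i.castSucc * y i.castSucc = ∑ i : Fin d, y i.castSucc ^ 2 :=
    Finset.sum_congr rfl fun i _ => (sq _).symm
  nlinarith [Finset.sum_nonneg (fun i (_ : i ∈ Finset.univ) => sq_nonneg (y (Fin.castSucc i)))]

lemma revCS (p q : Pt d) : 1 ≤ -(mink d p.1 q.1) := by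
  have h1 := master_ineq (p := p.1) (y := q.1) p.2.1
  rw [q.2.1] at h1
  have h2 := mink_neg_of_upper p.2.1 q.2.1 p.2.2 q.2.2
  nlinarith

lemma cosh_hdist (p q : Pt d) : Real.cosh (hdist p q) = -(mink d p.1 q.1) :=
  cosh_arcosh (revCS p q)

lemma hdist_nonneg (p q : Pt d) : 0 ≤ hdist p q := arcosh_nonneg (revCS p q)

lemma hdist_symm (p q : Pt d) : hdist p q = hdist q p := by
  unfold hdist; rw [mink_symm]

lemma hdist_eq_zero {p q : Pt d} (h : hdist p q = 0) : p = q := by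
  have h1 : -(mink d p.1 q.1) = 1 := by
    have := cosh_hdist p q; rw [h, Real.cosh_zero] at this; linarith
  have h2 : (mink d p.1 q.1) ^ 2 = -(mink d q.1 q.1) := by rw [q.2.1]; nlinarith
  have h3 := master_eq p.2.1 h2
  rw [h1, one_smul] at h3
  exact Subtype.ext h3.symm

lemma same_sheet {p : Pt d} {y : EuclideanSpace ℝ (Fin (d+1))}
    (hy : mink d y y = -1) (hneg : mink d p.1 y < 0) : 0 < y (Fin.last d) := by
  by_contra hcon
  push_neg at hcon
  have hne : y (Fin.last d) ≠ 0 := by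
    intro h0; have := last_sq_ge_one hy; rw [h0] at this; nlinarith
  have hlt : y (Fin.last d) < 0 := lt_of_le_of_ne hcon hne
  have hyneg : mink d (-y) (-y) = -1 := by
    have : (-y : EuclideanSpace ℝ (Fin (d+1))) = (-1 : ℝ) • y := by module
    rw [this, mink_smul_left, mink_smul_right, hy]; ring
  have hylast : 0 < (-y : EuclideanSpace ℝ (Fin (d+1))) (Fin.last d) := by
    have : (-y : EuclideanSpace ℝ (Fin (d+1))) (Fin.last d) = -(y (Fin.last d)) := rfl
    rw [this]; linarith
  have := mink_neg_of_upper p.2.1 hyneg p.2.2 hylast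
  have heq : mink d p.1 (-y) = -(mink d p.1 y) := by
    have h5 : (-y : EuclideanSpace ℝ (Fin (d+1))) = (-1 : ℝ) • y := by module
    rw [h5, mink_smul_right]; ring
  rw [heq] at this
  linarith

/-- Distance from a point to the totally geodesic hyperplane with unit normal `n`. -/
lemma distPS_plane {n : EuclideanSpace ℝ (Fin (d+1))} (hn : mink d n n = 1) (c : Pt d) :
    distPS c (plane n) = Real.arsinh |mink d n c.1| := by
  set s := mink d n c.1 with hs
  have hbound : ∀ q ∈ plane n, Real.arsinh |s| ≤ hdist c q := by
    intro q hq
    have hqn : mink d n q.1 = 0 := hq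
    have hy : mink d q.1 (c.1 - s • n) = mink d q.1 c.1 := by
      rw [mink_sub_right, mink_smul_right, mink_symm q.1 n, hqn]; ring
    have hyy : mink d (c.1 - s • n) (c.1 - s • n) = -1 - s ^ 2 := by
      rw [mink_sub_left, mink_sub_right, mink_sub_right, mink_smul_left, mink_smul_right,
        mink_smul_left, mink_smul_right, mink_symm c.1 n, c.2.1, hn]
      ring
    have hm := master_ineq (p := q.1) (y := c.1 - s • n) q.2.1
    rw [hy, hyy] at hm
    have hm2 : 1 + s ^ 2 ≤ (mink d q.1 c.1) ^ 2 := by linarith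
    have hneg := mink_neg_of_upper c.2.1 q.2.1 c.2.2 q.2.2
    have h3 : Real.sqrt (1 + s ^ 2) ≤ -(mink d c.1 q.1) := by
      rw [show -(mink d c.1 q.1) = |mink d q.1 c.1| by
        rw [abs_of_nonpos (by rw [mink_symm] at hneg; linarith), mink_symm]]
      rw [← Real.sqrt_sq_eq_abs]
      exact Real.sqrt_le_sqrt hm2
    calc Real.arsinh |s| = arcosh (Real.sqrt (1 + |s| ^ 2)) :=
          (arcosh_sqrt_one_add_sq (abs_nonneg s)).symm
    _ = arcosh (Real.sqrt (1 + s ^ 2)) := by rw [sq_abs]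
    _ ≤ arcosh (-(mink d c.1 q.1)) := arcosh_le_arcosh (by
        nlinarith [Real.sq_sqrt (show (0:ℝ) ≤ 1 + s^2 by positivity),
          Real.sqrt_nonneg (1+s^2)]) h3
    _ = hdist c q := rfl
  -- the projection point
  have hpos : (0:ℝ) < Real.sqrt (1 + s ^ 2) := Real.sqrt_pos.mpr (by positivity)
  have hsq : Real.sqrt (1 + s ^ 2) ^ 2 = 1 + s ^ 2 := Real.sq_sqrt (by positivity)
  set r := (Real.sqrt (1 + s ^ 2))⁻¹ with hr
  set q0v : EuclideanSpace ℝ (Fin (d+1)) := r • (c.1 - s • n) with hq0v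
  have hq0norm : mink d q0v q0v = -1 := by
    rw [hq0v, mink_smul_left, mink_smul_right]
    rw [show mink d (c.1 - s • n) (c.1 - s • n) = -1 - s ^ 2 by
      rw [mink_sub_left, mink_sub_right, mink_sub_right, mink_smul_left, mink_smul_right,
        mink_smul_left, mink_smul_right, mink_symm c.1 n, c.2.1, hn]; ring]
    have hrr : r * r * (1 + s ^ 2) = 1 := by
      rw [hr, ← mul_inv, show Real.sqrt (1+s^2) * Real.sqrt (1+s^2) = 1 + s^2 by
        nlinarith [hsq]]
      exact inv_mul_cancel₀ (by positivity)
    nlinarith [hrr]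
  have hcq0 : mink d c.1 q0v = -Real.sqrt (1 + s ^ 2) := by
    rw [hq0v, mink_smul_right, mink_sub_right, mink_smul_right, c.2.1, mink_symm c.1 n, ← hs]
    have h7 : r * (1 + s ^ 2) = Real.sqrt (1 + s ^ 2) := by
      rw [hr, inv_mul_eq_div, eq_comm, eq_div_iff (ne_of_gt hpos)]
      nlinarith [hsq]
    nlinarith [h7]
  have hq0last : 0 < q0v (Fin.last d) :=
    same_sheet hq0norm (by rw [hcq0]; linarith)
  set q0 : Pt d := ⟨q0v, hq0norm, hq0last⟩ with hq0
  have hq0mem : q0 ∈ plane n := by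
    show mink d n q0v = 0
    rw [hq0v, mink_smul_right, mink_sub_right, mink_smul_right, hn, ← hs]
    ring
  have hdq0 : hdist c q0 = Real.arsinh |s| := by
    show arcosh (-(mink d c.1 q0v)) = _
    rw [hcq0, neg_neg, ← sq_abs s, arcosh_sqrt_one_add_sq (abs_nonneg s)]
  have hbb : BddBelow (hdist c '' plane n) := by
    refine ⟨Real.arsinh |s|, ?_⟩
    rintro b ⟨q, hq, rfl⟩
    exact hbound q hq
  apply le_antisymm
  · exact csInf_le_of_le hbb ⟨q0, hq0mem, rfl⟩ (le_of_eq hdq0)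
  · refine le_csInf ⟨hdist c q0, ⟨q0, hq0mem, rfl⟩⟩ ?_
    rintro b ⟨q, hq, rfl⟩
    exact hbound q hq


/-- Metric betweenness forces a linear combination (unique geodesics). -/
lemma seg_combo {a b p : Pt d} (hp : p ∈ seg a b) :
    Real.sinh (hdist a b) • p.1
      = Real.sinh (hdist p b) • a.1 + Real.sinh (hdist a p) • b.1 := by
  set α := hdist a p with hα
  set β := hdist p b with hβ
  set γ := hdist a b with hγ
  have hsum : α + β = γ := hp
  have hca : mink d a.1 p.1 = -Real.cosh α := by
    have := cosh_hdist a p; rw [← hα] at this; linarith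
  have hcb : mink d p.1 b.1 = -Real.cosh β := by
    have := cosh_hdist p b; rw [← hβ] at this; linarith
  have hcg : mink d a.1 b.1 = -Real.cosh γ := by
    have := cosh_hdist a b; rw [← hγ] at this; linarith
  set q : EuclideanSpace ℝ (Fin (d+1)) :=
    Real.sinh γ • p.1 - Real.sinh β • a.1 - Real.sinh α • b.1 with hq
  have hqa : mink d a.1 q = 0 := by
    rw [hq, mink_sub_right, mink_sub_right, mink_smul_right, mink_smul_right, mink_smul_right,
      hca, a.2.1, hcg, ← hsum, Real.sinh_add, Real.cosh_add]
    linear_combination (-Real.sinh β) * Real.cosh_sq α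
  have hqb : mink d b.1 q = 0 := by
    rw [hq, mink_sub_right, mink_sub_right, mink_smul_right, mink_smul_right, mink_smul_right,
      mink_symm b.1 p.1, hcb, mink_symm b.1 a.1, hcg, b.2.1, ← hsum, Real.sinh_add, Real.cosh_add]
    linear_combination (-Real.sinh α) * Real.cosh_sq β
  have hqp : mink d q p.1 = 0 := by
    rw [hq, mink_sub_left, mink_sub_left, mink_smul_left, mink_smul_left, mink_smul_left,
      p.2.1, hca, mink_symm b.1 p.1, hcb, ← hsum, Real.sinh_add]
    ring
  have hqq : mink d q q = 0 := by
    have hexp : mink d q q = Real.sinh γ * mink d p.1 q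
        - Real.sinh β * mink d a.1 q - Real.sinh α * mink d b.1 q := by
      conv_lhs => rw [hq]
      rw [mink_sub_left, mink_sub_left, mink_smul_left, mink_smul_left, mink_smul_left]
    rw [hexp, mink_symm p.1 q, hqp, hqa, hqb]; ring
  have hq0 : q = 0 := ortho_eq_zero a.2.1 hqa hqq
  have h : Real.sinh γ • p.1 - Real.sinh β • a.1 - Real.sinh α • b.1 = 0 := by
    rw [← hq]; exact hq0
  have h2 : Real.sinh γ • p.1 - (Real.sinh β • a.1 + Real.sinh α • b.1) = 0 := by
    rw [sub_add_eq_sub_sub]; exact h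
  exact sub_eq_zero.mp h2

/-- The slab between a hyperplane and an equidistant surface is geodesically convex. -/
lemma slab_convex {n : EuclideanSpace ℝ (Fin (d+1))} {c : ℝ} :
    IsConvexSet {p : Pt d | 0 ≤ mink d n p.1 ∧ mink d n p.1 ≤ c} := by
  intro a ha b hb p hp
  rcases eq_or_lt_of_le (hdist_nonneg a b) with hz | hpos
  · have h0 : hdist a p = 0 := by
      have h1 := hp
      have := hdist_nonneg a p; have := hdist_nonneg p b
      have : hdist a p + hdist p b = hdist a b := h1
      linarith [hdist_nonneg a p, hdist_nonneg p b, this, hz.symm ▸ this]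
    have : a = p := hdist_eq_zero h0
    rwa [← this]
  · have hcombo := seg_combo hp
    have hsum : hdist a p + hdist p b = hdist a b := hp
    have hsg : 0 < Real.sinh (hdist a b) := Real.sinh_pos_iff.mpr hpos
    have hsa : 0 ≤ Real.sinh (hdist a p) := Real.sinh_nonneg_iff.mpr (hdist_nonneg a p)
    have hsb : 0 ≤ Real.sinh (hdist p b) := Real.sinh_nonneg_iff.mpr (hdist_nonneg p b)
    have hkey : Real.sinh (hdist a b) * mink d n p.1
        = Real.sinh (hdist p b) * mink d n a.1 + Real.sinh (hdist a p) * mink d n b.1 := by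
      have := congrArg (mink d n) hcombo
      rwa [mink_smul_right, mink_add_right, mink_smul_right, mink_smul_right] at this
    have hsum_sinh : Real.sinh (hdist p b) + Real.sinh (hdist a p) ≤ Real.sinh (hdist a b) := by
      rw [← hsum, Real.sinh_add]
      nlinarith [Real.one_le_cosh (hdist a p), Real.one_le_cosh (hdist p b)]
    constructor
    · have : 0 ≤ Real.sinh (hdist a b) * mink d n p.1 := by
        rw [hkey]
        have := mul_nonneg hsb ha.1
        have := mul_nonneg hsa hb.1
        linarith
      exact nonneg_of_mul_nonneg_right this hsg
    · have hle : Real.sinh (hdist a b) * mink d n p.1 ≤ Real.sinh (hdist a b) * c := by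
        rw [hkey]
        calc Real.sinh (hdist p b) * mink d n a.1 + Real.sinh (hdist a p) * mink d n b.1
            ≤ Real.sinh (hdist p b) * c + Real.sinh (hdist a p) * c := by
              have h1 := mul_le_mul_of_nonneg_left ha.2 hsb
              have h2 := mul_le_mul_of_nonneg_left hb.2 hsa
              linarith
        _ ≤ Real.sinh (hdist a b) * c := by nlinarith [hsum_sinh, ha.1, ha.2, le_trans ha.1 ha.2]
      exact le_of_mul_le_mul_left hle hsg

/-- Example 3: the width of the regular tetrahedron of edge `2x`
determined by a facet plane. -/
theorem width_of_regular_tetrahedron_facet (x : ℝ) (hx : 0 < x) (u v w z : Pt 3)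
    (huv : hdist u v = 2 * x) (huw : hdist u w = 2 * x) (huz : hdist u z = 2 * x)
    (hvw : hdist v w = 2 * x) (hvz : hdist v z = 2 * x) (hwz : hdist w z = 2 * x)
    (G : Set (Pt 3)) (hG : IsHyperplane G)
    (huG : u ∈ G) (hvG : v ∈ G) (hwG : w ∈ G) :
    width G (chull {u, v, w, z}) =
      arcosh (Real.cosh (2 * x) / Real.cosh (Real.arsinh (Real.sqrt (4 / 3) * Real.sinh x))) := by
  -- notation
  classical
  obtain ⟨v0, hv00, hGeq0⟩ := hG
  -- choose orientation of the normal so that z is on the nonnegative side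
  set n : EuclideanSpace ℝ (Fin 4) := if 0 ≤ mink 3 v0 z.1 then v0 else -v0 with hndef
  have hneg_eq : ∀ p : EuclideanSpace ℝ (Fin 4), mink 3 (-v0) p = -(mink 3 v0 p) := by
    intro p
    rw [show (-v0 : EuclideanSpace ℝ (Fin 4)) = (-1 : ℝ) • v0 by module, mink_smul_left]; ring
  have hn : mink 3 n n = 1 := by
    rw [hndef]
    split_ifs with h
    · exact hv00
    · rw [hneg_eq, mink_symm, hneg_eq, mink_symm, hv00]; norm_num
  have hGn : G = plane n := by
    rw [hGeq0, hndef]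
    split_ifs with h
    · rfl
    · ext p; show mink 3 v0 p.1 = 0 ↔ mink 3 (-v0) p.1 = 0
      rw [hneg_eq]; constructor <;> intro h' <;> linarith
  have hc0 : 0 ≤ mink 3 n z.1 := by
    rw [hndef]; split_ifs with h
    · exact h
    · rw [hneg_eq]; push_neg at h; linarith
  set c : ℝ := mink 3 n z.1 with hcdef
  set c2 : ℝ := Real.cosh (2 * x) with hc2def
  have hc2 : 1 < c2 := Real.one_lt_cosh.mpr (by positivity)
  have hden : (0:ℝ) < 1 + 2 * c2 := by linarith
  -- Gram matrix entries
  have hmk : ∀ (p q : Pt 3), hdist p q = 2 * x → mink 3 p.1 q.1 = -c2 := by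
    intro p q h
    have h1 := cosh_hdist p q
    rw [h] at h1
    rw [hc2def]; linarith
  have hUV := hmk u v huv
  have hUW := hmk u w huw
  have hUZ := hmk u z huz
  have hVW := hmk v w hvw
  have hVZ := hmk v z hvz
  have hWZ := hmk w z hwz
  rw [hGn] at huG hvG hwG
  have hnu : mink 3 n u.1 = 0 := huG
  have hnv : mink 3 n v.1 = 0 := hvG
  have hnw : mink 3 n w.1 = 0 := hwG
  -- linear independence of u, v, w, n
  have hli : LinearIndependent ℝ ![u.1, v.1, w.1, n] := by
    rw [Fintype.linearIndependent_iff]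
    intro g hg
    rw [Fin.sum_univ_four] at hg
    simp only [Matrix.cons_val_zero, Matrix.cons_val_one, Matrix.head_cons,
      Matrix.cons_val_two, Matrix.tail_cons, Matrix.cons_val_three] at hg
    have expand : ∀ y : EuclideanSpace ℝ (Fin 4),
        mink 3 (g 0 • u.1 + g 1 • v.1 + g 2 • w.1 + g 3 • n) y
          = g 0 * mink 3 u.1 y + g 1 * mink 3 v.1 y + g 2 * mink 3 w.1 y + g 3 * mink 3 n y := by
      intro y
      rw [mink_add_left, mink_add_left, mink_add_left, mink_smul_left, mink_smul_left,
        mink_smul_left, mink_smul_left]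
    have en := congrArg (fun t => mink 3 t n) hg
    rw [expand n, mink_zero_left] at en
    rw [mink_symm u.1 n, hnu, mink_symm v.1 n, hnv, mink_symm w.1 n, hnw, hn] at en
    have hg3 : g 3 = 0 := by linarith
    have eu := congrArg (fun t => mink 3 t u.1) hg
    rw [expand u.1, mink_zero_left, u.2.1, mink_symm v.1 u.1, hUV, mink_symm w.1 u.1, hUW,
      hnu] at eu
    have ev := congrArg (fun t => mink 3 t v.1) hg
    rw [expand v.1, mink_zero_left, v.2.1, hUV, mink_symm w.1 v.1, hVW, hnv] at ev
    have ew := congrArg (fun t => mink 3 t w.1) hg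
    rw [expand w.1, mink_zero_left, w.2.1, hUW, hVW, hnw] at ew
    have h01 : g 0 = g 1 := by
      have key : (c2 - 1) * (g 0 - g 1) = 0 := by linear_combination eu - ev
      rcases mul_eq_zero.mp key with h | h
      · linarith
      · linarith
    have h12 : g 1 = g 2 := by
      have key : (c2 - 1) * (g 1 - g 2) = 0 := by linear_combination ev - ew
      rcases mul_eq_zero.mp key with h | h
      · linarith
      · linarith
    have hg0 : g 0 = 0 := by
      have hsum0 : g 0 * (1 + 2 * c2) = 0 := by
        linear_combination -eu + 2 * c2 * h01 + c2 * h12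
      rcases mul_eq_zero.mp hsum0 with h | h
      · exact h
      · linarith
    intro i
    fin_cases i
    · exact hg0
    · show g 1 = 0; rw [← h01]; exact hg0
    · show g 2 = 0; rw [← h12, ← h01]; exact hg0
    · show g 3 = 0; exact hg3
  -- the decomposition of z
  set a : ℝ := c2 / (1 + 2 * c2) with hadef
  have ha : a * (1 + 2 * c2) = c2 := div_mul_cancel₀ _ (ne_of_gt hden)
  set qv : EuclideanSpace ℝ (Fin 4) := z.1 - a • (u.1 + v.1 + w.1) - c • n with hqvdef
  have hqexp : ∀ y : EuclideanSpace ℝ (Fin 4),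
      mink 3 qv y = mink 3 z.1 y - a * (mink 3 u.1 y + mink 3 v.1 y + mink 3 w.1 y)
        - c * mink 3 n y := by
    intro y
    rw [hqvdef, mink_sub_left, mink_sub_left, mink_smul_left, mink_smul_left,
      mink_add_left, mink_add_left]
  have hqu : mink 3 qv u.1 = 0 := by
    rw [hqexp, mink_symm z.1 u.1, hUZ, u.2.1, mink_symm v.1 u.1, hUV, mink_symm w.1 u.1, hUW, hnu]
    linear_combination ha
  have hqv2 : mink 3 qv v.1 = 0 := by
    rw [hqexp, mink_symm z.1 v.1, hVZ, hUV, v.2.1, mink_symm w.1 v.1, hVW, hnv]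
    linear_combination ha
  have hqw : mink 3 qv w.1 = 0 := by
    rw [hqexp, mink_symm z.1 w.1, hWZ, hUW, hVW, w.2.1, hnw]
    linear_combination ha
  have hqn : mink 3 qv n = 0 := by
    rw [hqexp, mink_symm z.1 n, ← hcdef, mink_symm u.1 n, hnu, mink_symm v.1 n, hnv,
      mink_symm w.1 n, hnw, hn]
    ring
  -- q is orthogonal to everything, hence zero
  have hspan : Submodule.span ℝ (Set.range ![u.1, v.1, w.1, n]) = ⊤ :=
    hli.span_eq_top_of_card_eq_finrank (by simp [finrank_euclideanSpace_fin])
  have hqmem : qv ∈ Submodule.span ℝ (Set.range ![u.1, v.1, w.1, n]) := by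
    rw [hspan]; trivial
  obtain ⟨f, hf⟩ := (Submodule.mem_span_range_iff_exists_fun ℝ).mp hqmem
  rw [Fin.sum_univ_four] at hf
  simp only [Matrix.cons_val_zero, Matrix.cons_val_one, Matrix.head_cons,
    Matrix.cons_val_two, Matrix.tail_cons, Matrix.cons_val_three] at hf
  have hqq : mink 3 qv qv = 0 := by
    nth_rewrite 2 [← hf]
    rw [mink_add_right, mink_add_right, mink_add_right, mink_smul_right, mink_smul_right,
      mink_smul_right, mink_smul_right, hqu, hqv2, hqw, hqn]
    ring
  have hq0 : qv = 0 := ortho_eq_zero u.2.1 (by rw [mink_symm]; exact hqu) hqq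
  have hzdec : z.1 = a • (u.1 + v.1 + w.1) + c • n := by
    have h1 : z.1 - a • (u.1 + v.1 + w.1) - c • n = 0 := by rw [← hqvdef]; exact hq0
    have h2 : z.1 - (a • (u.1 + v.1 + w.1) + c • n) = 0 := by
      rw [sub_add_eq_sub_sub]; exact h1
    exact sub_eq_zero.mp h2
  -- value of c^2
  have hcsq : 1 + c ^ 2 = 3 * c2 ^ 2 / (1 + 2 * c2) := by
    have h1 : mink 3 z.1 z.1 = a * (mink 3 z.1 u.1 + mink 3 z.1 v.1 + mink 3 z.1 w.1)
        + c * mink 3 z.1 n := by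
      nth_rewrite 2 [hzdec]
      rw [mink_add_right, mink_smul_right, mink_smul_right, mink_add_right, mink_add_right]
    rw [z.2.1, mink_symm z.1 u.1, hUZ, mink_symm z.1 v.1, hVZ, mink_symm z.1 w.1, hWZ,
      mink_symm z.1 n, ← hcdef] at h1
    -- h1 : -1 = a * (-c2 + -c2 + -c2) + c * c
    rw [eq_div_iff (ne_of_gt hden)]
    linear_combination (-(1+2*c2)) * h1 + 3*c2 * ha
  -- the slab
  set S : Set (Pt 3) := {p : Pt 3 | 0 ≤ mink 3 n p.1 ∧ mink 3 n p.1 ≤ c} with hSdef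
  have hSconv : IsConvexSet S := slab_convex
  have hsub : {u, v, w, z} ⊆ S := by
    intro p hp
    rcases hp with h | h | h | h
    · rw [h]; exact ⟨le_of_eq hnu.symm, by rw [hnu]; exact hc0⟩
    · rw [h]; exact ⟨le_of_eq hnv.symm, by rw [hnv]; exact hc0⟩
    · rw [h]; exact ⟨le_of_eq hnw.symm, by rw [hnw]; exact hc0⟩
    · rw [Set.mem_singleton_iff.mp h]; exact ⟨hc0, le_refl c⟩
  have hchS : chull {u, v, w, z} ⊆ S := Set.sInter_subset_of_mem ⟨hSconv, hsub⟩
  have hzch : z ∈ chull {u, v, w, z} := by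
    intro C hC
    exact hC.2 (by simp)
  -- compute the width
  set D : ℝ := Real.arsinh c with hDdef
  have hDz : distPS z G = D := by
    rw [hGn, distPS_plane hn, ← hcdef, abs_of_nonneg hc0]
  have hbound : ∀ p ∈ chull {u, v, w, z}, distPS p G ≤ D := by
    intro p hp
    obtain ⟨h1, h2⟩ := hchS hp
    rw [hGn, distPS_plane hn, abs_of_nonneg h1, hDdef]
    exact Real.arsinh_le_arsinh.mpr h2
  have hwidth : width G (chull {u, v, w, z}) = D := by
    rw [width]
    apply le_antisymm
    · refine csSup_le (Set.Nonempty.image _ ⟨z, hzch⟩) ?_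
      rintro b ⟨p, hp, rfl⟩
      exact hbound p hp
    · apply le_csSup
      · refine ⟨D, ?_⟩
        rintro b ⟨p, hp, rfl⟩
        exact hbound p hp
      · exact ⟨z, hzch, hDz⟩
  rw [hwidth]
  -- final computation
  have hch : Real.cosh (Real.arsinh (Real.sqrt (4 / 3) * Real.sinh x))
      = Real.sqrt ((1 + 2 * c2) / 3) := by
    rw [Real.cosh_arsinh]
    congr 1
    rw [mul_pow, Real.sq_sqrt (by norm_num : (4:ℝ)/3 ≥ 0)]
    have : c2 = 1 + 2 * Real.sinh x ^ 2 := by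
      rw [hc2def, Real.cosh_two_mul, Real.cosh_sq]; ring
    rw [this]; ring
  rw [hch]
  have hrt : (0:ℝ) < Real.sqrt ((1 + 2 * c2) / 3) := Real.sqrt_pos.mpr (by linarith)
  have hkey : Real.sqrt (1 + c ^ 2) = Real.cosh (2 * x) / Real.sqrt ((1 + 2 * c2) / 3) := by
    rw [eq_div_iff (ne_of_gt hrt), ← Real.sqrt_mul (by positivity)]
    rw [show (1 + c ^ 2) * ((1 + 2 * c2) / 3) = c2 ^ 2 by
      rw [hcsq]; field_simp]
    rw [← hc2def]
    exact Real.sqrt_sq (by linarith)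
  rw [hDdef, ← arcosh_sqrt_one_add_sq hc0, hkey]


end HypSpace
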